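/- Let p₀, p₁, p₂, q₀, q₁, q₂ ∈ 2^ω satisfy: p₀ ≰_T ⟨p₁,p₂⟩, p₁ ≰_T ⟨p₀,p₂⟩, q₀ ≰_T q₂, and q₂ ≰_T q₁. Let f, g, h : ⊆ 2^ω → 2^ω be the single-point partial functions mapping p₀ ↦ q₀, p₁ ↦ q₁, and p₂ ↦ q₂, respectively. Then (f ⊞ g) ⊓ h ≰_sW (f ⊓ h) ⊞ (g ⊓ h). -/

import Mathlib

attribute [local instance] Classical.propDecidable

namespace StrongWeihrauch

noncomputable section

/-! ### Cantor space, monotone approximations, and the evaluation map -/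

/-- Cantor space `2^ω`; we identify subsets of `ω` with their characteristic functions. -/
abbrev Cantor : Type := ℕ → Bool

/-- The coded triple `⟨n,s,i⟩`. -/
def tpl (n s i : ℕ) : ℕ := Nat.pair n (Nat.pair s i)

/-- A monotone approximation (Definition 3.1): every element has the form `⟨n,s,i⟩` with
`i < 2`; for each `n` there is at most one pair `(s,i)` with `⟨n,s,i⟩ ∈ a`; and the stages `s`
are strictly increasing in `n`. -/
def MonotoneApprox (a : Cantor) : Prop :=
  (∀ k, a k = true → ∃ n s i, i < 2 ∧ k = tpl n s i) ∧
  (∀ n s t i j, a (tpl n s i) = true → a (tpl n t j) = true → s = t ∧ i = j) ∧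
  (∀ m n s t i j, a (tpl m s i) = true → a (tpl n t j) = true → m < n → s < t)

/-- A total monotone approximation: every `n` gets a value. -/
def TotalMonotoneApprox (a : Cantor) : Prop :=
  MonotoneApprox a ∧ ∀ n, ∃ s i, i < 2 ∧ a (tpl n s i) = true

/-- The value of the evaluation map `e` on a (total) monotone approximation:
`eVal a n = i` iff `⟨n,s,i⟩ ∈ a` for some `s`. -/
def eVal (a : Cantor) : Cantor := fun n => decide (∃ s, a (tpl n s 1) = true)

/-- The evaluation map `e : ⊆ 2^ω → 2^ω`, the partial function whose domain is the set of
total monotone approximations `a`, with `e(a)(n) = i` iff `⟨n,s,i⟩ ∈ a` for some `s`. -/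
def evalMA : Cantor →. Cantor := fun a => ⟨TotalMonotoneApprox a, fun _ => eVal a⟩

/-! ### Turing functionals -/

/-- The oracle information available at stage `s`: the first `s` bits of `p`. -/
def initSeg (p : Cantor) (s : ℕ) : List Bool := (List.range s).map p

/-- A `{0,1}`-valued Turing functional on Cantor space, presented by a computable monotone
finite-prefix approximation: `approx σ n = some b` means that the computation on input `n`
with oracle prefix `σ` has converged, with output `b`. -/
structure TuringFunctional where
  approx : List Bool → ℕ → Option Bool
  computable : Computable₂ approx
  mono : ∀ σ τ n b, σ <+: τ → approx σ n = some b → approx τ n = some b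

namespace TuringFunctional

/-- `Φ^p(n)[s]↓`. -/
def ConvAt (Φ : TuringFunctional) (p : Cantor) (n s : ℕ) : Prop :=
  (Φ.approx (initSeg p s) n).isSome = true

/-- `s` is least such that `Φ^p(n)[s]↓`. -/
def LeastStage (Φ : TuringFunctional) (p : Cantor) (n s : ℕ) : Prop :=
  Φ.ConvAt p n s ∧ ∀ t, t < s → ¬ Φ.ConvAt p n t

/-- Convention 2.1: if `Φ^p(n)[s]↓` then `Φ^p(m)[s]↓` for all `m < n`, and for each `s`
there is at most one `n` for which `s` is least with `Φ^p(n)[s]↓`. -/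
def Convention (Φ : TuringFunctional) : Prop :=
  (∀ (p : Cantor) (s n m : ℕ), m < n → Φ.ConvAt p n s → Φ.ConvAt p m s) ∧
  (∀ (p : Cantor) (s n n' : ℕ), Φ.LeastStage p n s → Φ.LeastStage p n' s → n = n')

/-- The partial function `⊆ 2^ω → 2^ω` computed by `Φ`; it is defined at `p` exactly when
`Φ(p)` is total, in which case its value is the map `n ↦ Φ^p(n)`. -/
def eval (Φ : TuringFunctional) : Cantor →. Cantor :=
  fun p => ⟨∀ n, ∃ s b, Φ.approx (initSeg p s) n = some b,
    fun h n => (h n).choose_spec.choose⟩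

end TuringFunctional

/-- `a_{Φ(p)}`: the set of all `⟨n,s,i⟩` where `s` is least such that `Φ^p(n)[s]↓ = i`. -/
def approxSeq (Φ : TuringFunctional) (p : Cantor) : Cantor := fun k =>
  decide (∃ n s b, k = tpl n s (Bool.toNat b) ∧ Φ.LeastStage p n s ∧
    Φ.approx (initSeg p s) n = some b)

/-- Turing reducibility `q ≤_T p` on Cantor space. -/
def TuringLe (q p : Cantor) : Prop := ∃ Φ : TuringFunctional, Φ.eval p = Part.some q

/-! ### Pairing on Cantor space -/

/-- The effective join `⟨p,q⟩` on Cantor space. -/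
def pairC (p q : Cantor) : Cantor := fun n => if n % 2 = 0 then p (n / 2) else q (n / 2)

def leftC (r : Cantor) : Cantor := fun n => r (2 * n)

def rightC (r : Cantor) : Cantor := fun n => r (2 * n + 1)

/-- The singleton `{i} ⊆ ω` as an element of Cantor space. -/
def natSet (i : ℕ) : Cantor := fun n => decide (n = i)

/-- `⟨i,p⟩`, i.e. `⟨{i},p⟩`. -/
def inC (i : ℕ) (p : Cantor) : Cantor := pairC (natSet i) p

lemma leftC_pairC (p q : Cantor) : leftC (pairC p q) = p := by
  funext n
  have h1 : 2 * n % 2 = 0 := by omega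
  have h2 : 2 * n / 2 = n := by omega
  simp [leftC, pairC, h1, h2]

lemma rightC_pairC (p q : Cantor) : rightC (pairC p q) = q := by
  funext n
  have h1 : (2 * n + 1) % 2 = 1 := by omega
  have h2 : (2 * n + 1) / 2 = n := by omega
  simp [rightC, pairC, h1, h2]

lemma tpl_inj {n s i n' s' i' : ℕ} (h : tpl n s i = tpl n' s' i') :
    n = n' ∧ s = s' ∧ i = i' := by
  unfold tpl at h
  rw [Nat.pair_eq_pair] at h
  rcases h with ⟨h1, h2⟩
  rw [Nat.pair_eq_pair] at h2
  exact ⟨h1, h2.1, h2.2⟩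

lemma toNat_lt_two (b : Bool) : b.toNat < 2 := by cases b <;> decide

/-- Encoding of `q ∈ 2^ω` as a total monotone approximation evaluating to `q`. -/
def maEncode (q : Cantor) : Cantor := fun k => decide (∃ n, k = tpl n n (q n).toNat)

lemma maEncode_mem {q : Cantor} {k : ℕ} :
    maEncode q k = true ↔ ∃ n, k = tpl n n (q n).toNat := by
  simp [maEncode]

lemma maEncode_total (q : Cantor) : TotalMonotoneApprox (maEncode q) := by
  refine ⟨⟨?_, ?_, ?_⟩, ?_⟩
  · intro k hk
    obtain ⟨n, rfl⟩ := maEncode_mem.mp hk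
    exact ⟨n, n, (q n).toNat, toNat_lt_two _, rfl⟩
  · intro n s t i j h1 h2
    obtain ⟨m, hm⟩ := maEncode_mem.mp h1
    obtain ⟨m', hm'⟩ := maEncode_mem.mp h2
    obtain ⟨e1, e2, e3⟩ := tpl_inj hm
    obtain ⟨f1, f2, f3⟩ := tpl_inj hm'
    have hmm' : m = m' := by omega
    refine ⟨by omega, by rw [e3, f3, hmm']⟩
  · intro m n s t i j h1 h2 hmn
    obtain ⟨u, hu⟩ := maEncode_mem.mp h1
    obtain ⟨v, hv⟩ := maEncode_mem.mp h2
    obtain ⟨e1, e2, _⟩ := tpl_inj hu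
    obtain ⟨f1, f2, _⟩ := tpl_inj hv
    omega
  · intro n
    exact ⟨n, (q n).toNat, toNat_lt_two _, maEncode_mem.mpr ⟨n, rfl⟩⟩

lemma eVal_maEncode (q : Cantor) : eVal (maEncode q) = q := by
  funext n
  have hiff : (∃ s, maEncode q (tpl n s 1) = true) ↔ q n = true := by
    constructor
    · rintro ⟨s, hs⟩
      obtain ⟨m, hm⟩ := maEncode_mem.mp hs
      obtain ⟨e1, e2, e3⟩ := tpl_inj hm
      subst e1
      cases hq : q n
      · rw [hq] at e3; simp at e3
      · rfl
    · intro hq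
      refine ⟨n, maEncode_mem.mpr ⟨n, ?_⟩⟩
      rw [hq]
      rfl
  cases hq : q n
  · have hne : ¬ (∃ s, maEncode q (tpl n s 1) = true) := by
      intro h
      have ht := hiff.mp h
      rw [ht] at hq
      exact Bool.noConfusion hq
    simp [eVal, hne]
  · simp [eVal, hiff.mpr hq]

/-- An explicit non-(monotone approximation). -/
def badMA : Cantor := fun k => decide (k = tpl 0 0 0 ∨ k = tpl 0 1 0)

lemma badMA_not : ¬ TotalMonotoneApprox badMA := by
  rintro ⟨⟨-, h2, -⟩, -⟩
  have ha : badMA (tpl 0 0 0) = true := by simp [badMA]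
  have hb : badMA (tpl 0 1 0) = true := by simp [badMA]
  have := (h2 0 0 1 0 0 ha hb).1
  omega

/-! ### Represented spaces -/

/-- A represented space: a set `X` together with a partial surjection `δ : ⊆ 2^ω → X`. -/
structure RepSp : Type 1 where
  X : Type
  δ : Cantor →. X
  surj : ∀ x : X, ∃ p, x ∈ δ p

namespace RepSp

/-- The product representation of `X₀ × X₁`: `δ(⟨p₀,p₁⟩) = (δ₀(p₀), δ₁(p₁))`. -/
def prod (A B : RepSp) : RepSp where
  X := A.X × B.X
  δ := fun r => (A.δ (leftC r)).bind fun x => (B.δ (rightC r)).map fun y => (x, y)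
  surj := by
    rintro ⟨x, y⟩
    obtain ⟨p, hp⟩ := A.surj x
    obtain ⟨q, hq⟩ := B.surj y
    refine ⟨pairC p q, ?_⟩
    simp only [leftC_pairC, rightC_pairC, Part.mem_bind_iff]
    exact ⟨x, hp, Part.mem_map _ hq⟩

/-- The disjoint-union representation of `X₀ ⊔ X₁`: `δ(⟨i,p⟩) = ⟨i, δᵢ(p)⟩`. -/
def sum (A B : RepSp) : RepSp where
  X := A.X ⊕ B.X
  δ := fun r =>
    if leftC r = natSet 0 then (A.δ (rightC r)).map Sum.inl
    else if leftC r = natSet 1 then (B.δ (rightC r)).map Sum.inr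
    else Part.none
  surj := by
    rintro (x | y)
    · obtain ⟨p, hp⟩ := A.surj x
      refine ⟨inC 0 p, ?_⟩
      have e1 : leftC (inC 0 p) = natSet 0 := leftC_pairC _ _
      have e2 : rightC (inC 0 p) = p := rightC_pairC _ _
      simp only [e1, e2, if_pos rfl]
      exact Part.mem_map _ hp
    · obtain ⟨p, hp⟩ := B.surj y
      refine ⟨inC 1 p, ?_⟩
      have e1 : leftC (inC 1 p) = natSet 1 := leftC_pairC _ _
      have e2 : rightC (inC 1 p) = p := rightC_pairC _ _
      have hne : natSet 1 ≠ natSet 0 := by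
        intro h
        have := congrFun h 0
        simp [natSet] at this
      simp only [e1, e2, hne, if_neg, if_pos rfl, ite_false, ite_true]
      exact Part.mem_map _ hp

/-- The completion `Ŷ = Y ∪ {∞_Y}` (with `∞_Y` rendered as `none`), represented by
`δ_Ŷ(p) = δ_Y(e(p))` if `p` is a total monotone approximation with `e(p) ∈ dom(δ_Y)`, and
`δ_Ŷ(p) = ∞_Y` otherwise. -/
def hat (A : RepSp) : RepSp where
  X := Option A.X
  δ := fun p => Part.some (((evalMA p).bind A.δ).toOption)
  surj := by
    intro y
    match y with
    | none =>
        refine ⟨badMA, ?_⟩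
        rw [Part.mem_some_iff]
        have hd : ¬ ((evalMA badMA).bind A.δ).Dom := by
          rintro ⟨h1, -⟩
          exact badMA_not h1
        rw [eq_comm, Part.toOption_eq_none_iff]
        exact hd
    | some x =>
        obtain ⟨p, hp⟩ := A.surj x
        refine ⟨maEncode p, ?_⟩
        rw [Part.mem_some_iff, eq_comm, Part.toOption_eq_some_iff]
        refine Part.mem_bind_iff.mpr ?_
        refine ⟨p, ?_, hp⟩
        exact ⟨maEncode_total p, eVal_maEncode p⟩

end RepSp

/-! ### Partial multifunctions and the Weihrauch reducibilities -/

/-- A partial multifunction `f : ⊆ X ⇉ Y` between represented spaces: `f.f x` is the set of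
solutions of the instance `x`, and the domain of `f` is the set of `x` with `f.f x ≠ ∅`. -/
structure MFn : Type 1 where
  A : RepSp
  B : RepSp
  f : A.X → Set B.X

namespace MFn

/-- The coproduct `f ⊔ g`. -/
def sqcup (f g : MFn) : MFn where
  A := f.A.sum g.A
  B := f.B.sum g.B
  f := Sum.elim (fun x => Sum.inl '' f.f x) (fun y => Sum.inr '' g.f y)

/-- The meet `f ⊓ g`, with `(f ⊓ g)(⟨x,y⟩) = ({0} × f(x)) ∪ ({1} × g(y))` for
`x ∈ dom f`, `y ∈ dom g`. -/
def sqcap (f g : MFn) : MFn where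
  A := f.A.prod g.A
  B := f.B.sum g.B
  f := fun xy =>
    if (f.f xy.1).Nonempty ∧ (g.f xy.2).Nonempty then
      (Sum.inl '' f.f xy.1) ∪ (Sum.inr '' g.f xy.2)
    else ∅

/-- The join `f ⊞ g : ⊆ X₀ ⊔ X₁ ⇉ Ŷ₀ × Ŷ₁`, with `(f ⊞ g)(⟨0,x⟩) = f(x) × Ŷ₁` and
`(f ⊞ g)(⟨1,x⟩) = Ŷ₀ × g(x)`. -/
def boxplus (f g : MFn) : MFn where
  A := f.A.sum g.A
  B := (f.B.hat).prod (g.B.hat)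
  f := Sum.elim
    (fun x => (Option.some '' f.f x) ×ˢ (Set.univ : Set (Option g.B.X)))
    (fun y => (Set.univ : Set (Option f.B.X)) ×ˢ (Option.some '' g.f y))

end MFn

/-- `F ⊢ f`: the partial function `F : ⊆ 2^ω → 2^ω` is a realizer of `f`, i.e.
`δ_Y F(p) ∈ f δ_X(p)` for every `p ∈ dom(f δ_X)`. -/
def Realizes (F : Cantor →. Cantor) (f : MFn) : Prop :=
  ∀ p x, x ∈ f.A.δ p → (f.f x).Nonempty →
    ∃ q ∈ F p, ∃ y ∈ f.B.δ q, y ∈ f.f x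

/-- Composition of partial functions on Cantor space: `pcomp F G = F ∘ G`. -/
def pcomp (F G : Cantor →. Cantor) : Cantor →. Cantor := fun p => (G p).bind F

/-- Strong Weihrauch reducibility: `f ≤_sW g` iff there are Turing functionals `Φ, Ψ` with
`Ψ G Φ ⊢ f` for every `G ⊢ g`. -/
def sWLe (f g : MFn) : Prop :=
  ∃ Φ Ψ : TuringFunctional, ∀ G : Cantor →. Cantor, Realizes G g →
    Realizes (pcomp Ψ.eval (pcomp G Φ.eval)) f

/-- Strong Weihrauch equivalence. -/
def sWEq (f g : MFn) : Prop := sWLe f g ∧ sWLe g f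

/-- Weihrauch reducibility: `f ≤_W g` iff there are Turing functionals `Φ, Ψ` with
`Ψ⟨id, G Φ⟩ ⊢ f` for every `G ⊢ g`. -/
def wLe (f g : MFn) : Prop :=
  ∃ Φ Ψ : TuringFunctional, ∀ G : Cantor →. Cantor, Realizes G g →
    Realizes (fun p => (pcomp G Φ.eval p).bind fun q => Ψ.eval (pairC p q)) f

/-- Weihrauch equivalence. -/
def wEq (f g : MFn) : Prop := wLe f g ∧ wLe g f

/-- Cantor space as a represented space, with the identity representation. -/
def CantorSp : RepSp where
  X := Cantor
  δ := fun p => Part.some p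
  surj := fun p => ⟨p, Part.mem_some_iff.mpr rfl⟩

/-- A partial multifunction on Cantor space, viewed as a multifunction on represented
spaces via the identity representation. -/
def ofCantor (F : Cantor → Set Cantor) : MFn := ⟨CantorSp, CantorSp, F⟩

/-! ### Further definitions used in the statements -/

/-- `c` is an index for the Turing functional `Ψ`. -/
def codesTF (c : Nat.Partrec.Code) (Ψ : TuringFunctional) : Prop :=
  ∀ (σ : List Bool) (n : ℕ),
    c.eval (Nat.pair (Encodable.encode σ) n) = Part.some (Encodable.encode (Ψ.approx σ n))

/-- The multifunction `h` of Lemma 4.4: `h(⟨0,p⟩)` consists of all pairs `⟨a,q⟩` where `a`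
is a total monotone approximation with `e(a) ∈ F(p)`, and `h(⟨1,p⟩)` of all pairs `⟨q,a⟩`
where `a` is a total monotone approximation with `e(a) ∈ G(p)`. -/
def hJoin (F G : Cantor → Set Cantor) : Cantor → Set Cantor := fun r =>
  {z | leftC r = natSet 0 ∧
    ∃ a q, z = pairC a q ∧ TotalMonotoneApprox a ∧ eVal a ∈ F (rightC r)} ∪
  {z | leftC r = natSet 1 ∧
    ∃ q a, z = pairC q a ∧ TotalMonotoneApprox a ∧ eVal a ∈ G (rightC r)}

/-- A single-valued partial function on Cantor space, viewed as a partial multifunction on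
represented spaces (via the identity representation). -/
def pfnToM (F : Cantor →. Cantor) : MFn := ofCantor fun p => {q | q ∈ F p}

/-- The single-point partial function `{p} → {q}`. -/
def singleFn (p q : Cantor) : MFn := ofCantor fun r => if r = p then {q} else ∅

/-- `A` is Medvedev reducible to `B`. -/
def MedvedevLe (A B : Set Cantor) : Prop :=
  ∃ Φ : TuringFunctional, ∀ p ∈ B, ∃ q ∈ Φ.eval p, q ∈ A

/-- The all-zero sequence `0^ω`. -/
def zeroSeq : Cantor := fun _ => false

/-- `d_A : A → {0^ω}`. -/
def dFn (A : Set Cantor) : MFn := ofCantor fun p => if p ∈ A then {zeroSeq} else ∅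

/-- `A ⊔ B ⊆ 2^ω`: all `⟨i,p⟩` with `i < 2` and `p ∈ A` if `i = 0`, `p ∈ B` if `i = 1`. -/
def setSum (A B : Set Cantor) : Set Cantor :=
  {r | ∃ p ∈ A, r = inC 0 p} ∪ {r | ∃ p ∈ B, r = inC 1 p}

/-- `A × B ⊆ 2^ω`: all pairs `⟨p,q⟩` with `p ∈ A` and `q ∈ B`. -/
def setProd (A B : Set Cantor) : Set Cantor := {r | ∃ p ∈ A, ∃ q ∈ B, r = pairC p q}

/-- `p` is a name of an instance of `f`. -/
def domName (f : MFn) (p : Cantor) : Prop := ∃ x ∈ f.A.δ p, (f.f x).Nonempty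

/-- `q` is a name of a solution to the instance of `f` named by `p`. -/
def solName (f : MFn) (p q : Cantor) : Prop :=
  ∃ x ∈ f.A.δ p, ∃ y ∈ f.B.δ q, y ∈ f.f x

/-- Strong computable reducibility `f ≤_sc g`: every name `p` of an instance of `f`
computes a name `p'` of an instance of `g` such that every name of a solution to the
latter computes a name of a solution to the former. -/
def scLe (f g : MFn) : Prop :=
  ∀ p, domName f p → ∃ p', TuringLe p' p ∧ domName g p' ∧
    ∀ q, solName g p' q → ∃ z, TuringLe z q ∧ solName f p z

/-- Strong computable equivalence. -/
def scEq (f g : MFn) : Prop := scLe f g ∧ scLe g f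

/-! ### Auxiliary development for stmt13 -/

section Aux

namespace TuringFunctional

lemma initSeg_length (p : Cantor) (s : ℕ) : (initSeg p s).length = s := by
  simp [initSeg]

lemma initSeg_get? (p : Cantor) {k s : ℕ} (h : k < s) :
    (initSeg p s)[k]? = some (p k) := by
  simp [initSeg, List.getElem?_map, List.getElem?_range h]

lemma initSeg_getD (p : Cantor) {k s : ℕ} (h : k < s) :
    (initSeg p s).getD k false = p k := by
  have h' : k < (initSeg p s).length := by rw [initSeg_length]; exact h
  rw [List.getD_eq_getElem _ _ h']
  simp [initSeg]

lemma initSeg_prefix (p : Cantor) {s t : ℕ} (h : s ≤ t) :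
    initSeg p s <+: initSeg p t := by
  rw [List.prefix_iff_eq_take]
  rw [initSeg_length]
  simp [initSeg, ← List.map_take, List.take_range, Nat.min_eq_left h]

lemma approx_mono_oracle (Φ : TuringFunctional) {p : Cantor} {s t n : ℕ} {b : Bool}
    (hst : s ≤ t) (h : Φ.approx (initSeg p s) n = some b) :
    Φ.approx (initSeg p t) n = some b :=
  Φ.mono _ _ _ _ (initSeg_prefix p hst) h

lemma approx_agree (Φ : TuringFunctional) {p : Cantor} {s t n : ℕ} {b c : Bool}
    (hb : Φ.approx (initSeg p s) n = some b) (hc : Φ.approx (initSeg p t) n = some c) :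
    b = c := by
  rcases le_total s t with h | h
  · have := Φ.approx_mono_oracle h hb
    rw [this] at hc; exact (Option.some_inj.mp hc)
  · have := Φ.approx_mono_oracle h hc
    rw [this] at hb; exact (Option.some_inj.mp hb).symm

lemma mem_eval {Φ : TuringFunctional} {p q : Cantor} :
    q ∈ Φ.eval p ↔ ∀ n, ∃ s, Φ.approx (initSeg p s) n = some (q n) := by
  constructor
  · rintro ⟨h, rfl⟩ n
    exact ⟨(h n).choose, (h n).choose_spec.choose_spec⟩
  · intro h
    have dom : ∀ n, ∃ s b, Φ.approx (initSeg p s) n = some b := by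
      intro n; obtain ⟨s, hs⟩ := h n; exact ⟨s, q n, hs⟩
    refine ⟨dom, funext fun n => ?_⟩
    obtain ⟨s, hs⟩ := h n
    exact Φ.approx_agree (dom n).choose_spec.choose_spec hs

lemma eval_eq_some {Φ : TuringFunctional} {p q : Cantor} (h : q ∈ Φ.eval p) :
    Φ.eval p = Part.some q :=
  Part.eq_some_iff.mpr h

end TuringFunctional

lemma turingLe_of_mem {Φ : TuringFunctional} {p q : Cantor} (h : q ∈ Φ.eval p) :
    TuringLe q p :=
  ⟨Φ, TuringFunctional.eval_eq_some h⟩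

/-! ### Plan-based Turing functionals -/

/-- The value computed by a "plan": each output bit is either a constant or a
(possibly negated) oracle bit. -/
def planEval (u : ℕ → Bool ⊕ ℕ × Bool) (p : Cantor) : Cantor := fun n =>
  Sum.casesOn (u n) id fun ic => xor ic.2 (p ic.1)

def planApprox (u : ℕ → Bool ⊕ ℕ × Bool) : List Bool → ℕ → Option Bool := fun σ n =>
  Sum.casesOn (u n) some fun ic => (σ[ic.1]?).map fun x => xor ic.2 x

lemma get?_mono {σ τ : List Bool} {i : ℕ} {b : Bool} (h : σ <+: τ)
    (hb : σ[i]? = some b) : τ[i]? = some b := by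
  obtain ⟨r, rfl⟩ := h
  have hi : i < σ.length := by
    by_contra hi
    rw [List.getElem?_eq_none (le_of_not_gt hi)] at hb
    exact Option.some_ne_none _ hb.symm
  rw [List.getElem?_append_left hi]
  exact hb

def planTF (u : ℕ → Bool ⊕ ℕ × Bool) (hu : Primrec u) : TuringFunctional where
  approx := planApprox u
  computable := by
    have h1 : Primrec₂ (planApprox u) := by
      unfold planApprox
      apply Primrec.sumCasesOn (hu.comp Primrec.snd)
      · exact (Primrec.option_some.comp Primrec.snd).to₂
      · have hf : Primrec fun p : (List Bool × ℕ) × ℕ × Bool => p.1.1[p.2.1]? :=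
          Primrec.list_getElem?.comp (Primrec.fst.comp Primrec.fst)
            (Primrec.fst.comp Primrec.snd)
        have hg : Primrec₂ fun (p : (List Bool × ℕ) × ℕ × Bool) (x : Bool) =>
            xor p.2.2 x :=
          (Primrec.dom_bool₂ xor).comp (Primrec.snd.comp (Primrec.snd.comp Primrec.fst))
            Primrec.snd
        exact Primrec.option_map hf hg
    exact h1.to_comp
  mono := by
    intro σ τ n b hpre hb
    unfold planApprox at hb ⊢
    rcases hun : u n with c | ic <;> rw [hun] at hb
    · exact hb
    · rcases Option.map_eq_some_iff.mp hb with ⟨x, hx, hxb⟩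
      simp only [get?_mono hpre hx, Option.map_some]
      rw [hxb]

lemma planTF_eval (u : ℕ → Bool ⊕ ℕ × Bool) (hu : Primrec u) (p : Cantor) :
    planEval u p ∈ (planTF u hu).eval p := by
  rw [TuringFunctional.mem_eval]
  intro n
  show ∃ s, planApprox u (initSeg p s) n = some (planEval u p n)
  unfold planApprox planEval
  rcases hun : u n with c | ic
  · exact ⟨0, rfl⟩
  · refine ⟨ic.1 + 1, ?_⟩
    show Option.map _ ((initSeg p (ic.1+1))[ic.1]?) = _
    rw [TuringFunctional.initSeg_get? p (Nat.lt_succ_self _)]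
    rfl

lemma planEval_le (u : ℕ → Bool ⊕ ℕ × Bool) (hu : Primrec u) (p : Cantor) :
    TuringLe (planEval u p) p :=
  turingLe_of_mem (planTF_eval u hu p)

end Aux

/-! ### A least-witness search, and the evaluation functional -/

section Aux2

def frec (P : ℕ → Bool) (m : ℕ) : Option ℕ :=
  Nat.rec (motive := fun _ => Option ℕ) none
    (fun y IH => Option.casesOn IH (cond (P y) (some y) none) some) m

lemma frec_succ (P : ℕ → Bool) (m : ℕ) :
    frec P (m + 1) = Option.casesOn (frec P m) (cond (P m) (some m) none) some := rfl

lemma frec_mono {P : ℕ → Bool} {m m' k : ℕ} (h : m ≤ m') (hk : frec P m = some k) :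
    frec P m' = some k := by
  induction m' with
  | zero => exact (Nat.le_zero.mp h) ▸ hk
  | succ m' ih =>
    rcases Nat.lt_or_ge m (m' + 1) with h' | h'
    · have := ih (Nat.lt_succ_iff.mp h')
      rw [frec_succ, this]
    · have : m = m' + 1 := le_antisymm h h'
      exact this ▸ hk

lemma frec_congr {P Q : ℕ → Bool} {m : ℕ} (h : ∀ i < m, P i = Q i) :
    frec P m = frec Q m := by
  induction m with
  | zero => rfl
  | succ m ih =>
    rw [frec_succ, frec_succ, ih (fun i hi => h i (Nat.lt_succ_of_lt hi)),
      h m (Nat.lt_succ_self m)]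

lemma frec_spec {P : ℕ → Bool} {m k : ℕ} (h : frec P m = some k) :
    k < m ∧ P k = true := by
  induction m with
  | zero => exact (Option.some_ne_none _ h.symm).elim
  | succ m ih =>
    rw [frec_succ] at h
    cases hm : frec P m with
    | none =>
      rw [hm] at h
      cases hP : P m with
      | false => rw [hP] at h; exact (Option.some_ne_none _ h.symm).elim
      | true =>
        rw [hP] at h
        obtain rfl := Option.some_inj.mp h
        exact ⟨Nat.lt_succ_self _, hP⟩
    | some j =>
      rw [hm] at h
      obtain rfl := Option.some_inj.mp h
      obtain ⟨h1, h2⟩ := ih hm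
      exact ⟨Nat.lt_succ_of_lt h1, h2⟩

lemma frec_exists {P : ℕ → Bool} {m k : ℕ} (hk : k < m) (hP : P k = true) :
    ∃ k', frec P m = some k' := by
  induction m with
  | zero => exact absurd hk (Nat.not_lt_zero k)
  | succ m ih =>
    cases hm : frec P m with
    | some j => exact ⟨j, by rw [frec_succ, hm]⟩
    | none =>
      rcases Nat.lt_or_ge k m with h' | h'
      · obtain ⟨k', hk'⟩ := ih h'
        rw [hk'] at hm; exact (Option.some_ne_none _ hm).elim
      · have hkm : k = m := le_antisymm (Nat.lt_succ_iff.mp hk) h'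
        refine ⟨m, ?_⟩
        rw [frec_succ, hm]
        show cond (P m) (some m) none = some m
        rw [← hkm, hP]
        rfl

/-- The search predicate for the evaluation functional. -/
def eP (n : ℕ) (σ : List Bool) (k : ℕ) : Bool :=
  σ.getD k false && (k.unpair.1 == n)

lemma eP_congr {σ τ : List Bool} (n : ℕ) (h : σ <+: τ) {i : ℕ} (hi : i < σ.length) :
    eP n σ i = eP n τ i := by
  obtain ⟨r, rfl⟩ := h
  unfold eP
  rw [List.getD_append _ _ _ _ hi]

def eApprox : List Bool → ℕ → Option Bool := fun σ n =>
  (frec (eP n σ) σ.length).map fun k => k.unpair.2.unpair.2 == 1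

def eTF : TuringFunctional where
  approx := eApprox
  computable := by
    have hP : Primrec fun x : (List Bool × ℕ) × ℕ × Option ℕ => eP x.1.2 x.1.1 x.2.1 := by
      unfold eP
      have h1 : Primrec fun x : (List Bool × ℕ) × ℕ × Option ℕ =>
          x.1.1.getD x.2.1 false :=
        (Primrec.list_getD false).comp (Primrec.fst.comp Primrec.fst)
          (Primrec.fst.comp Primrec.snd)
      have h2 : Primrec fun x : (List Bool × ℕ) × ℕ × Option ℕ =>
          x.2.1.unpair.1 == x.1.2 :=
        Primrec.beq.comp
          (Primrec.fst.comp (Primrec.unpair.comp (Primrec.fst.comp Primrec.snd)))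
          (Primrec.snd.comp Primrec.fst)
      exact (Primrec.dom_bool₂ (· && ·)).comp h1 h2
    have hstep : Primrec₂ fun (p : List Bool × ℕ) (q : ℕ × Option ℕ) =>
        Option.casesOn (motive := fun _ => Option ℕ) q.2
          (cond (eP p.2 p.1 q.1) (some q.1) none) some := by
      apply Primrec.option_casesOn (Primrec.snd.comp Primrec.snd)
      · exact Primrec.cond hP
          (Primrec.option_some.comp (Primrec.fst.comp Primrec.snd))
          (Primrec.const none)
      · exact (Primrec.option_some.comp Primrec.snd).to₂
    have hfrec : Primrec fun p : List Bool × ℕ => frec (eP p.2 p.1) p.1.length :=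
      Primrec.nat_rec' (Primrec.list_length.comp Primrec.fst)
        (Primrec.const none) hstep
    have hmap : Primrec fun p : List Bool × ℕ =>
        (frec (eP p.2 p.1) p.1.length).map fun k => k.unpair.2.unpair.2 == 1 :=
      Primrec.option_map hfrec
        (Primrec.beq.comp
          (Primrec.snd.comp (Primrec.unpair.comp (Primrec.snd.comp
            (Primrec.unpair.comp Primrec.snd))))
          (Primrec.const 1))
    exact Primrec.to_comp hmap
  mono := by
    intro σ τ n b hpre hb
    unfold eApprox at hb ⊢
    rcases Option.map_eq_some_iff.mp hb with ⟨k, hk, hkb⟩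
    have h1 : frec (eP n τ) σ.length = some k := by
      rw [← frec_congr (fun i hi => eP_congr n hpre hi)]
      exact hk
    rw [frec_mono hpre.length_le h1, Option.map_some, hkb]

set_option maxHeartbeats 2000000 in
lemma eTF_mem {a : Cantor} (h : TotalMonotoneApprox a) : eVal a ∈ eTF.eval a := by
  rw [TuringFunctional.mem_eval]
  intro n
  obtain ⟨s₀, i, hi2, hcomm⟩ := h.2 n
  set k₀ := tpl n s₀ i with hk₀
  refine ⟨k₀ + 1, ?_⟩
  show eApprox (initSeg a (k₀ + 1)) n = some (eVal a n)
  unfold eApprox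
  have hlen : (initSeg a (k₀ + 1)).length = k₀ + 1 := TuringFunctional.initSeg_length _ _
  have hPk₀ : eP n (initSeg a (k₀ + 1)) k₀ = true := by
    unfold eP
    rw [TuringFunctional.initSeg_getD a (Nat.lt_succ_self _)]
    have h1 : k₀.unpair.1 = n := by rw [hk₀]; unfold tpl; rw [Nat.unpair_pair]
    rw [h1, hcomm]
    simp
  obtain ⟨k', hk'⟩ := frec_exists (m := (initSeg a (k₀ + 1)).length)
    (by rw [hlen]; exact Nat.lt_succ_self _) hPk₀
  obtain ⟨hk'lt, hk'P⟩ := frec_spec hk'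
  rw [hlen] at hk'lt
  -- identify k' with k₀
  have hak' : a k' = true ∧ k'.unpair.1 = n := by
    unfold eP at hk'P
    rw [TuringFunctional.initSeg_getD a hk'lt] at hk'P
    simp only [Bool.and_eq_true, beq_iff_eq] at hk'P
    exact hk'P
  obtain ⟨n', s', i', hi'2, hke⟩ := h.1.1 k' hak'.1
  have hn' : n' = n := by
    have := hak'.2
    rw [hke] at this; unfold tpl at this; rw [Nat.unpair_pair] at this
    exact this
  rw [hn'] at hke
  have hae : a (tpl n s' i') = true := hke ▸ hak'.1
  obtain ⟨hs, hi⟩ := h.1.2.1 n s' s₀ i' i hae hcomm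
  have hkk : k' = k₀ := by rw [hke, hs, hi, hk₀]
  rw [hk', hkk]
  have hui : k₀.unpair.2.unpair.2 = i := by
    rw [hk₀]; unfold tpl; rw [Nat.unpair_pair, Nat.unpair_pair]
  rw [Option.map_some]
  congr 1
  rw [hui]
  rw [hk₀] at hcomm
  interval_cases i
  · have he : eVal a n = false := by
      unfold eVal
      rw [decide_eq_false_iff_not]
      rintro ⟨t, ht⟩
      have := (h.1.2.1 n t s₀ 1 0 ht hcomm).2
      exact one_ne_zero this
    rw [he]; rfl
  · have he : eVal a n = true := by
      unfold eVal
      rw [decide_eq_true_iff]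
      exact ⟨s₀, hcomm⟩
    rw [he]; rfl

lemma eVal_le {a : Cantor} (h : TotalMonotoneApprox a) : TuringLe (eVal a) a :=
  turingLe_of_mem (eTF_mem h)

/-! ### Composition of Turing functionals -/

def midStep (Θ : TuringFunctional) (σ : List Bool) (q : ℕ × List Bool) : List Bool :=
  Option.casesOn (Θ.approx σ q.2.length) q.2 fun b => q.2 ++ [b]

def midRec (Θ : TuringFunctional) (σ : List Bool) (k : ℕ) : List Bool :=
  Nat.rec (motive := fun _ => List Bool) [] (fun y IH => midStep Θ σ (y, IH)) k

def mid (Θ : TuringFunctional) (σ : List Bool) : List Bool := midRec Θ σ σ.length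

lemma midRec_succ (Θ : TuringFunctional) (σ : List Bool) (k : ℕ) :
    midRec Θ σ (k + 1) = midStep Θ σ (k, midRec Θ σ k) := rfl

lemma midRec_prefix_succ (Θ : TuringFunctional) (σ : List Bool) (k : ℕ) :
    midRec Θ σ k <+: midRec Θ σ (k + 1) := by
  rw [midRec_succ]
  unfold midStep
  cases Θ.approx σ (midRec Θ σ k).length with
  | none => exact List.prefix_rfl
  | some b => exact ⟨[b], rfl⟩

lemma midRec_prefix (Θ : TuringFunctional) (σ : List Bool) {j k : ℕ} (h : j ≤ k) :
    midRec Θ σ j <+: midRec Θ σ k := by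
  induction k with
  | zero => exact (Nat.le_zero.mp h) ▸ List.prefix_rfl
  | succ k ih =>
    rcases Nat.lt_or_ge j (k + 1) with h' | h'
    · exact (ih (Nat.lt_succ_iff.mp h')).trans (midRec_prefix_succ Θ σ k)
    · exact (le_antisymm h h') ▸ List.prefix_rfl

lemma midRec_entries (Θ : TuringFunctional) (σ : List Bool) (k : ℕ) :
    ∀ i, i < (midRec Θ σ k).length →
      Θ.approx σ i = some ((midRec Θ σ k).getD i false) := by
  induction k with
  | zero => intro i hi; exact absurd hi (by simp [midRec])
  | succ k ih =>
    intro i hi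
    rw [midRec_succ] at hi ⊢
    unfold midStep at hi ⊢
    cases happ : Θ.approx σ (midRec Θ σ k).length with
    | none => rw [happ] at hi; exact ih i hi
    | some b =>
      rw [happ] at hi
      simp only [List.length_append, List.length_singleton] at hi
      rcases Nat.lt_or_ge i (midRec Θ σ k).length with h' | h'
      · rw [List.getD_append _ _ _ _ h']
        exact ih i h'
      · have : i = (midRec Θ σ k).length := by omega
        subst this
        rw [List.getD_append_right _ _ _ _ (le_refl _)]
        simp [happ]

lemma midRec_mono_σ (Θ : TuringFunctional) {σ τ : List Bool} (hpre : σ <+: τ) (k : ℕ) :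
    midRec Θ σ k <+: midRec Θ τ k := by
  induction k with
  | zero => exact List.prefix_rfl
  | succ k ih =>
    rw [midRec_succ, midRec_succ]
    unfold midStep
    cases happ : Θ.approx σ (midRec Θ σ k).length with
    | none =>
      refine ih.trans ?_
      cases Θ.approx τ (midRec Θ τ k).length with
      | none => exact List.prefix_rfl
      | some c => exact ⟨[c], rfl⟩
    | some b =>
      have hτb : Θ.approx τ (midRec Θ σ k).length = some b := Θ.mono _ _ _ _ hpre happ
      rcases lt_or_eq_of_le ih.length_le with hlt | heq
      · obtain ⟨r, hr⟩ := ih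
        have hr' : r ≠ [] := by
          intro h0; rw [h0, List.append_nil] at hr; rw [hr] at hlt; omega
        obtain ⟨b', r', rfl⟩ := List.exists_cons_of_ne_nil hr'
        have hb' : b' = b := by
          have hent := midRec_entries Θ τ k (midRec Θ σ k).length hlt
          rw [← hr, List.getD_append_right _ _ _ _ (le_refl _)] at hent
          simp only [Nat.sub_self, List.getD_cons_zero] at hent
          rw [hτb] at hent
          exact (Option.some_inj.mp hent).symm
        have h1 : midRec Θ σ k ++ [b] <+: midRec Θ τ k := by
          refine ⟨r', ?_⟩
          rw [← hr, hb']
          simp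
        refine h1.trans ?_
        cases Θ.approx τ (midRec Θ τ k).length with
        | none => exact List.prefix_rfl
        | some c => exact ⟨[c], rfl⟩
      · rw [← ih.eq_of_length heq, hτb]

lemma midRec_reach (Θ : TuringFunctional) (σ : List Bool) {r : Cantor} {n : ℕ}
    (h : ∀ i < n, Θ.approx σ i = some (r i)) {k : ℕ} (hk : n ≤ k) :
    initSeg r n <+: midRec Θ σ k := by
  -- length lower bound
  have hlen : ∀ m, min m n ≤ (midRec Θ σ m).length := by
    intro m
    induction m with
    | zero => simp
    | succ m ih =>
      rcases Nat.lt_or_ge (midRec Θ σ m).length n with hl | hl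
      · have happ := h _ hl
        rw [midRec_succ]
        unfold midStep
        rw [happ]
        simp only [List.length_append, List.length_singleton]
        omega
      · have := (midRec_prefix_succ Θ σ m).length_le
        omega
  have hlenk : n ≤ (midRec Θ σ k).length := by
    have := hlen k
    omega
  -- entries agree with r
  have hent : ∀ i (hi : i < n), (midRec Θ σ k)[i]'(lt_of_lt_of_le hi hlenk) = r i := by
    intro i hi
    have h1 := midRec_entries Θ σ k i (lt_of_lt_of_le hi hlenk)
    rw [h _ hi] at h1
    have := Option.some_inj.mp h1
    rw [List.getD_eq_getElem _ _ (lt_of_lt_of_le hi hlenk)] at this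
    exact this.symm
  rw [List.prefix_iff_eq_take]
  apply List.ext_getElem
  · simp [TuringFunctional.initSeg_length, hlenk]
  · intro i h1 h2
    rw [List.getElem_take]
    have hi : i < n := by
      have := TuringFunctional.initSeg_length r n
      omega
    rw [hent i hi]
    simp [initSeg]

def compTF (Θ₂ Θ₁ : TuringFunctional) : TuringFunctional where
  approx σ n := Θ₂.approx (mid Θ₁ σ) n
  computable := by
    have hmid : Computable (mid Θ₁) := by
      have hstep : Computable₂ fun (σ : List Bool) (q : ℕ × List Bool) =>
          Option.casesOn (motive := fun _ => List Bool) (Θ₁.approx σ q.2.length) q.2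
            fun b => q.2 ++ [b] := by
        apply Computable.option_casesOn
          (Θ₁.computable.comp Computable.fst
            (Computable.list_length.comp (Computable.snd.comp Computable.snd)))
          (Computable.snd.comp Computable.snd)
        exact (Computable.list_concat.comp
          (Computable.snd.comp (Computable.snd.comp Computable.fst)) Computable.snd).to₂
      exact Computable.nat_rec Computable.list_length (Computable.const []) hstep
    exact Θ₂.computable.comp (hmid.comp Computable.fst) Computable.snd
  mono := by
    intro σ τ n b hpre hb
    have h1 : mid Θ₁ σ <+: mid Θ₁ τ := by
      unfold mid
      exact (midRec_mono_σ Θ₁ hpre σ.length).trans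
        (midRec_prefix Θ₁ τ hpre.length_le)
    exact Θ₂.mono _ _ _ _ h1 hb

lemma stages {Θ : TuringFunctional} {q r : Cantor}
    (h : ∀ i, ∃ s, Θ.approx (initSeg q s) i = some (r i)) (n : ℕ) :
    ∃ S, ∀ i < n, Θ.approx (initSeg q S) i = some (r i) := by
  induction n with
  | zero => exact ⟨0, fun i hi => absurd hi (Nat.not_lt_zero i)⟩
  | succ n ih =>
    obtain ⟨S, hS⟩ := ih
    obtain ⟨s', hs'⟩ := h n
    refine ⟨max S s', fun i hi => ?_⟩
    rcases Nat.lt_or_ge i n with h' | h'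
    · exact Θ.approx_mono_oracle (le_max_left _ _) (hS i h')
    · have : i = n := by omega
      subst this
      exact Θ.approx_mono_oracle (le_max_right _ _) hs'

lemma compTF_mem {Θ₂ Θ₁ : TuringFunctional} {q r z : Cantor}
    (h1 : r ∈ Θ₁.eval q) (h2 : z ∈ Θ₂.eval r) : z ∈ (compTF Θ₂ Θ₁).eval q := by
  rw [TuringFunctional.mem_eval] at h1 h2 ⊢
  intro n
  obtain ⟨s', hs'⟩ := h2 n
  obtain ⟨S, hS⟩ := stages h1 s'
  refine ⟨max S s', ?_⟩
  show Θ₂.approx (mid Θ₁ (initSeg q (max S s'))) n = some (z n)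
  have hpre : initSeg r s' <+: mid Θ₁ (initSeg q (max S s')) := by
    unfold mid
    apply midRec_reach
    · intro i hi
      exact Θ₁.approx_mono_oracle (le_max_left _ _) (hS i hi)
    · rw [TuringFunctional.initSeg_length]
      exact le_max_right _ _
  exact Θ₂.mono _ _ _ _ hpre hs'

lemma turingLe_trans {z r q : Cantor} (h2 : TuringLe z r) (h1 : TuringLe r q) :
    TuringLe z q := by
  obtain ⟨Θ₂, hΘ₂⟩ := h2
  obtain ⟨Θ₁, hΘ₁⟩ := h1
  have hr : r ∈ Θ₁.eval q := by rw [hΘ₁]; exact Part.mem_some r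
  have hz : z ∈ Θ₂.eval r := by rw [hΘ₂]; exact Part.mem_some z
  exact turingLe_of_mem (compTF_mem hr hz)

end Aux2

/-! ### Delayed encodings and concrete plans -/

section Aux3

lemma beq_eq_xor_not (a c : Bool) : (a == c) = xor (!c) a := by
  cases a <;> cases c <;> rfl

lemma decide_eq_beq (x y : ℕ) {_ : Decidable (x = y)} : decide (x = y) = (x == y) := by
  by_cases h : x = y
  · rw [decide_eq_true h, (beq_iff_eq).mpr h]
  · rw [decide_eq_false h, eq_comm]
    exact beq_eq_false_iff_ne.mpr h

lemma tpl_ge (n s i : ℕ) : s ≤ tpl n s i :=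
  le_trans (Nat.left_le_pair s i) (Nat.right_le_pair n _)

lemma tpl_unpair (n s i : ℕ) :
    (tpl n s i).unpair.1 = n ∧ (tpl n s i).unpair.2.unpair.1 = s ∧
      (tpl n s i).unpair.2.unpair.2 = i := by
  unfold tpl
  rw [Nat.unpair_pair]
  simp [Nat.unpair_pair]

/-- Encoding of `t` as a total monotone approximation, delayed by `d` stages. -/
def delayMA (d : ℕ) (t : Cantor) : Cantor := fun k =>
  decide (∃ n, k = tpl n (n + d + 1) (t n).toNat)

lemma delayMA_mem {d : ℕ} {t : Cantor} {k : ℕ} :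
    delayMA d t k = true ↔ ∃ n, k = tpl n (n + d + 1) (t n).toNat := by
  simp [delayMA]

lemma delayMA_total (d : ℕ) (t : Cantor) : TotalMonotoneApprox (delayMA d t) := by
  refine ⟨⟨?_, ?_, ?_⟩, ?_⟩
  · intro k hk
    obtain ⟨n, rfl⟩ := delayMA_mem.mp hk
    exact ⟨n, n + d + 1, (t n).toNat, toNat_lt_two _, rfl⟩
  · intro n s u i j h1 h2
    obtain ⟨m, hm⟩ := delayMA_mem.mp h1
    obtain ⟨m', hm'⟩ := delayMA_mem.mp h2
    obtain ⟨e1, e2, e3⟩ := tpl_inj hm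
    obtain ⟨f1, f2, f3⟩ := tpl_inj hm'
    have hmm' : m = m' := by omega
    refine ⟨by omega, by rw [e3, f3, hmm']⟩
  · intro m n s u i j h1 h2 hmn
    obtain ⟨a, ha⟩ := delayMA_mem.mp h1
    obtain ⟨c, hc⟩ := delayMA_mem.mp h2
    obtain ⟨e1, e2, _⟩ := tpl_inj ha
    obtain ⟨f1, f2, _⟩ := tpl_inj hc
    omega
  · intro n
    exact ⟨n + d + 1, (t n).toNat, toNat_lt_two _, delayMA_mem.mpr ⟨n, rfl⟩⟩

lemma eVal_delayMA (d : ℕ) (t : Cantor) : eVal (delayMA d t) = t := by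
  funext n
  have hiff : (∃ s, delayMA d t (tpl n s 1) = true) ↔ t n = true := by
    constructor
    · rintro ⟨s, hs⟩
      obtain ⟨m, hm⟩ := delayMA_mem.mp hs
      obtain ⟨e1, e2, e3⟩ := tpl_inj hm
      subst e1
      cases hq : t n
      · rw [hq] at e3; simp at e3
      · rfl
    · intro hq
      refine ⟨n + d + 1, delayMA_mem.mpr ⟨n, ?_⟩⟩
      rw [hq]
      rfl
  cases hq : t n
  · have hne : ¬ (∃ s, delayMA d t (tpl n s 1) = true) := by
      intro h
      have ht := hiff.mp h
      rw [ht] at hq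
      exact Bool.noConfusion hq
    simp [eVal, hne]
  · simp [eVal, hiff.mpr hq]

lemma delayMA_low {d : ℕ} {t : Cantor} {k : ℕ} (h : k < d + 1) : delayMA d t k = false := by
  rw [← Bool.not_eq_true, delayMA_mem]
  rintro ⟨n, rfl⟩
  have := tpl_ge n (n + d + 1) (t n).toNat
  omega

/-- Characterization of one bit of an encoded sequence. -/
lemma enc_bit (st : ℕ → ℕ) (t : Cantor) (j : ℕ) :
    decide (∃ n, j = tpl n (st n) (t n).toNat) =
      cond ((j.unpair.2.unpair.1 == st j.unpair.1) && (j.unpair.2.unpair.2 - 1 == 0))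
        (t j.unpair.1 == (j.unpair.2.unpair.2 == 1)) false := by
  have hj : j = tpl j.unpair.1 j.unpair.2.unpair.1 j.unpair.2.unpair.2 := by
    unfold tpl
    rw [Nat.pair_unpair, Nat.pair_unpair]
  by_cases hc : j.unpair.2.unpair.1 = st j.unpair.1 ∧ j.unpair.2.unpair.2 < 2
  · have hg : ((j.unpair.2.unpair.1 == st j.unpair.1) &&
        (j.unpair.2.unpair.2 - 1 == 0)) = true := by
      rw [Bool.and_eq_true, beq_iff_eq, beq_iff_eq]
      omega
    rw [hg, cond_true]
    have hiff : (∃ n, j = tpl n (st n) (t n).toNat) ↔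
        (t j.unpair.1).toNat = j.unpair.2.unpair.2 := by
      constructor
      · rintro ⟨m, hm⟩
        rw [hj] at hm
        obtain ⟨e1, e2, e3⟩ := tpl_inj hm
        rw [← e1] at e3
        exact e3.symm
      · intro he
        refine ⟨j.unpair.1, ?_⟩
        rw [he, ← hc.1]
        exact hj
    have h2 := hc.2
    have hval : (t j.unpair.1).toNat = j.unpair.2.unpair.2 ↔
        (t j.unpair.1 == (j.unpair.2.unpair.2 == 1)) = true := by
      rcases (by omega : j.unpair.2.unpair.2 = 0 ∨ j.unpair.2.unpair.2 = 1) with hi | hi <;>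
        rw [hi] <;> cases ht : t j.unpair.1 <;> simp
    cases hb : (t j.unpair.1 == (j.unpair.2.unpair.2 == 1)) with
    | true => exact decide_eq_true (hiff.mpr (hval.mpr hb))
    | false =>
      apply decide_eq_false
      intro hex
      have hcontr := hval.mp (hiff.mp hex)
      rw [hb] at hcontr
      exact Bool.noConfusion hcontr
  · have hg : ((j.unpair.2.unpair.1 == st j.unpair.1) &&
        (j.unpair.2.unpair.2 - 1 == 0)) = false := by
      rw [Bool.and_eq_false_iff]
      rcases Decidable.not_and_iff_or_not.mp hc with h | h
      · left; exact beq_eq_false_iff_ne.mpr h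
      · right; rw [beq_eq_false_iff_ne]; omega
    rw [hg, cond_false]
    rw [decide_eq_false]
    rintro ⟨m, hm⟩
    rw [hj] at hm
    obtain ⟨e1, e2, e3⟩ := tpl_inj hm
    apply hc
    constructor
    · rw [e2, e1]
    · rw [e3, ← e1]
      exact toNat_lt_two _

/-! ### The concrete plans -/

def uComp (c e : ℕ) : ℕ → Bool ⊕ ℕ × Bool := fun n => Sum.inr (c * n + e, false)

lemma uComp_eval (c e : ℕ) (p : Cantor) :
    planEval (uComp c e) p = fun n => p (c * n + e) := by
  funext n
  simp [planEval, uComp]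

lemma primrec_uComp (c e : ℕ) : Primrec (uComp c e) :=
  Primrec.sumInr.comp (Primrec.pair
    (Primrec.nat_add.comp (Primrec.nat_mul.comp (Primrec.const c) Primrec.id)
      (Primrec.const e))
    (Primrec.const false))

lemma turingLe_lr (v : Cantor) : TuringLe (leftC (rightC v)) v := by
  have h : leftC (rightC v) = planEval (uComp 4 1) v := by
    rw [uComp_eval]
    funext n
    show v (2 * (2 * n) + 1) = v (4 * n + 1)
    congr 1
    ring
  rw [h]
  exact planEval_le _ (primrec_uComp 4 1) v

lemma turingLe_r (v : Cantor) : TuringLe (rightC v) v := by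
  have h : rightC v = planEval (uComp 2 1) v := by
    rw [uComp_eval]
    rfl
  rw [h]
  exact planEval_le _ (primrec_uComp 2 1) v

def uIn (b : ℕ) : ℕ → Bool ⊕ ℕ × Bool := fun k =>
  cond (k % 2 == 1) (Sum.inr (k, false))
    (cond (k / 2 % 2 == 0) (Sum.inl (k / 2 / 2 == b)) (Sum.inr (k / 2 - 1, false)))

lemma uIn_eval (b : ℕ) (p q : Cantor) :
    planEval (uIn b) (pairC p q) = pairC (inC b p) q := by
  funext k
  unfold planEval uIn
  rcases Nat.mod_two_eq_zero_or_one k with h2 | h2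
  · rw [show (k % 2 == 1) = false from beq_eq_false_iff_ne.mpr (by omega), cond_false]
    rcases Nat.mod_two_eq_zero_or_one (k / 2) with h3 | h3
    · rw [show (k / 2 % 2 == 0) = true from beq_iff_eq.mpr h3, cond_true]
      show (k / 2 / 2 == b) = pairC (inC b p) q k
      unfold pairC inC pairC natSet
      rw [if_pos h2, if_pos h3, decide_eq_beq]
    · rw [show (k / 2 % 2 == 0) = false from beq_eq_false_iff_ne.mpr (by omega), cond_false]
      show xor false (pairC p q (k / 2 - 1)) = pairC (inC b p) q k
      unfold pairC inC pairC
      rw [if_pos h2]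
      obtain ⟨j, hjj⟩ : ∃ j, k / 2 = j := ⟨_, rfl⟩
      rw [hjj] at h3 ⊢
      rw [if_pos (show (j - 1) % 2 = 0 by omega), if_neg (show ¬ j % 2 = 0 by omega),
        Bool.false_xor]
      congr 1
      omega
  · rw [show (k % 2 == 1) = true from beq_iff_eq.mpr h2, cond_true]
    show xor false (pairC p q k) = pairC (inC b p) q k
    unfold pairC
    rw [if_neg (by omega), if_neg (by omega), Bool.false_xor]

lemma primrec_uIn (b : ℕ) : Primrec (uIn b) := by
  have hmod : Primrec fun k : ℕ => k % 2 == 1 :=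
    Primrec.beq.comp (Primrec.nat_mod.comp Primrec.id (Primrec.const 2))
      (Primrec.const 1)
  have hdiv : Primrec fun k : ℕ => k / 2 :=
    Primrec.nat_div.comp Primrec.id (Primrec.const 2)
  have hmod2 : Primrec fun k : ℕ => k / 2 % 2 == 0 :=
    Primrec.beq.comp (Primrec.nat_mod.comp hdiv (Primrec.const 2)) (Primrec.const 0)
  exact Primrec.cond hmod
    (Primrec.sumInr.comp (Primrec.pair Primrec.id (Primrec.const false)))
    (Primrec.cond hmod2
      (Primrec.sumInl.comp (Primrec.beq.comp
        (Primrec.nat_div.comp hdiv (Primrec.const 2)) (Primrec.const b)))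
      (Primrec.sumInr.comp (Primrec.pair
        (Primrec.nat_sub.comp hdiv (Primrec.const 1)) (Primrec.const false))))

lemma turingLe_pair_in (b : ℕ) (p q : Cantor) :
    TuringLe (pairC (inC b p) q) (pairC p q) := by
  rw [← uIn_eval]
  exact planEval_le _ (primrec_uIn b) _

/-- The plan computing bit `j` of the (`st`-staged) encoding of `inC b q` from oracle `q`. -/
def encPlan (st : ℕ → ℕ) (b : ℕ) (j : ℕ) : Bool ⊕ ℕ × Bool :=
  cond ((j.unpair.2.unpair.1 == st j.unpair.1) && (j.unpair.2.unpair.2 - 1 == 0))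
    (cond (j.unpair.1 % 2 == 0)
      (Sum.inl ((j.unpair.1 / 2 == b) == (j.unpair.2.unpair.2 == 1)))
      (Sum.inr (j.unpair.1 / 2, !(j.unpair.2.unpair.2 == 1))))
    (Sum.inl false)

lemma encPlan_eval (st : ℕ → ℕ) (b : ℕ) (q : Cantor) (j : ℕ) :
    planEval (encPlan st b) q j = decide (∃ n, j = tpl n (st n) ((inC b q) n).toNat) := by
  rw [enc_bit st (inC b q) j]
  unfold planEval encPlan
  cases hg : (j.unpair.2.unpair.1 == st j.unpair.1) && (j.unpair.2.unpair.2 - 1 == 0)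
  · rfl
  · rw [cond_true, cond_true]
    rcases Nat.mod_two_eq_zero_or_one j.unpair.1 with h2 | h2
    · rw [show (j.unpair.1 % 2 == 0) = true from beq_iff_eq.mpr h2, cond_true]
      show ((j.unpair.1 / 2 == b) == (j.unpair.2.unpair.2 == 1)) = _
      have : inC b q j.unpair.1 = (j.unpair.1 / 2 == b) := by
        unfold inC pairC natSet
        rw [if_pos h2, decide_eq_beq]
      rw [this]
    · rw [show (j.unpair.1 % 2 == 0) = false from beq_eq_false_iff_ne.mpr (by omega),
        cond_false]
      show xor (!(j.unpair.2.unpair.2 == 1)) (q (j.unpair.1 / 2)) = _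
      have : inC b q j.unpair.1 = q (j.unpair.1 / 2) := by
        unfold inC pairC
        rw [if_neg (by omega)]
      rw [this, beq_eq_xor_not]

lemma primrec_encPlan {st : ℕ → ℕ} (hst : Primrec st) (b : ℕ) :
    Primrec (encPlan st b) := by
  have hn : Primrec fun j : ℕ => j.unpair.1 := Primrec.fst.comp Primrec.unpair
  have hs : Primrec fun j : ℕ => j.unpair.2.unpair.1 :=
    Primrec.fst.comp (Primrec.unpair.comp (Primrec.snd.comp Primrec.unpair))
  have hi : Primrec fun j : ℕ => j.unpair.2.unpair.2 :=
    Primrec.snd.comp (Primrec.unpair.comp (Primrec.snd.comp Primrec.unpair))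
  have hguard : Primrec fun j : ℕ =>
      (j.unpair.2.unpair.1 == st j.unpair.1) && (j.unpair.2.unpair.2 - 1 == 0) :=
    (Primrec.dom_bool₂ (· && ·)).comp
      (Primrec.beq.comp hs (hst.comp hn))
      (Primrec.beq.comp (Primrec.nat_sub.comp hi (Primrec.const 1)) (Primrec.const 0))
  have heven : Primrec fun j : ℕ => j.unpair.1 % 2 == 0 :=
    Primrec.beq.comp (Primrec.nat_mod.comp hn (Primrec.const 2)) (Primrec.const 0)
  have hieq : Primrec fun j : ℕ => (j.unpair.2.unpair.2 == 1) :=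
    Primrec.beq.comp hi (Primrec.const 1)
  exact Primrec.cond hguard
    (Primrec.cond heven
      (Primrec.sumInl.comp (Primrec.beq.comp
        (Primrec.beq.comp (Primrec.nat_div.comp hn (Primrec.const 2)) (Primrec.const b))
        hieq))
      (Primrec.sumInr.comp (Primrec.pair
        (Primrec.nat_div.comp hn (Primrec.const 2))
        ((Primrec.dom_bool (!·)).comp hieq))))
    (Primrec.const (Sum.inl false))

/-! ### The sequences `q_A` and `q_B` -/

def qAseq (q₂ : Cantor) : Cantor := pairC (maEncode (inC 1 q₂)) zeroSeq

def qBseq (q₂ q₁ : Cantor) (s : ℕ) : Cantor := fun k =>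
  if k < s then qAseq q₂ k
  else if k % 2 = 1 then delayMA s (inC 0 q₁) (k / 2) else false

def uA : ℕ → Bool ⊕ ℕ × Bool := fun k =>
  cond (k % 2 == 0) (encPlan (fun n => n) 1 (k / 2)) (Sum.inl false)

lemma uA_eval (q₂ : Cantor) : planEval uA q₂ = qAseq q₂ := by
  funext k
  unfold uA
  rcases Nat.mod_two_eq_zero_or_one k with h2 | h2
  · have hg : (k % 2 == 0) = true := beq_iff_eq.mpr h2
    show planEval uA q₂ k = _
    unfold planEval uA
    rw [hg, cond_true]
    show planEval (encPlan (fun n => n) 1) q₂ (k / 2) = _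
    rw [encPlan_eval]
    unfold qAseq pairC
    rw [if_pos h2]
    rfl
  · have hg : (k % 2 == 0) = false := beq_eq_false_iff_ne.mpr (by omega)
    show planEval uA q₂ k = _
    unfold planEval uA
    rw [hg, cond_false]
    unfold qAseq pairC
    rw [if_neg (by omega)]
    rfl

lemma primrec_uA : Primrec uA := by
  have hmod : Primrec fun k : ℕ => k % 2 == 0 :=
    Primrec.beq.comp (Primrec.nat_mod.comp Primrec.id (Primrec.const 2))
      (Primrec.const 0)
  exact Primrec.cond hmod
    ((primrec_encPlan Primrec.id 1).comp
      (Primrec.nat_div.comp Primrec.id (Primrec.const 2)))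
    (Primrec.const (Sum.inl false))

lemma qA_le (q₂ : Cantor) : TuringLe (qAseq q₂) q₂ := by
  rw [← uA_eval]
  exact planEval_le _ primrec_uA _

def uB (s : ℕ) (L : List Bool) : ℕ → Bool ⊕ ℕ × Bool := fun k =>
  cond (k + 1 - s == 0) (Sum.inl (L.getD k false))
    (cond (k % 2 == 1) (encPlan (fun n => n + s + 1) 0 (k / 2)) (Sum.inl false))

lemma uB_eval (q₂ q₁ : Cantor) (s : ℕ) :
    planEval (uB s (initSeg (qAseq q₂) s)) q₁ = qBseq q₂ q₁ s := by
  funext k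
  by_cases hks : k < s
  · have hg : (k + 1 - s == 0) = true := beq_iff_eq.mpr (by omega)
    show planEval _ q₁ k = _
    unfold planEval uB
    rw [hg, cond_true]
    show (initSeg (qAseq q₂) s).getD k false = qBseq q₂ q₁ s k
    rw [TuringFunctional.initSeg_getD _ hks]
    unfold qBseq
    rw [if_pos hks]
  · have hg : (k + 1 - s == 0) = false := beq_eq_false_iff_ne.mpr (by omega)
    rcases Nat.mod_two_eq_zero_or_one k with h2 | h2
    · have hg2 : (k % 2 == 1) = false := beq_eq_false_iff_ne.mpr (by omega)
      show planEval _ q₁ k = _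
      unfold planEval uB
      rw [hg, cond_false, hg2, cond_false]
      unfold qBseq
      rw [if_neg hks, if_neg (by omega)]
      rfl
    · have hg2 : (k % 2 == 1) = true := beq_iff_eq.mpr h2
      show planEval _ q₁ k = _
      unfold planEval uB
      rw [hg, cond_false, hg2, cond_true]
      show planEval (encPlan (fun n => n + s + 1) 0) q₁ (k / 2) = _
      rw [encPlan_eval]
      unfold qBseq
      rw [if_neg hks, if_pos h2]
      rfl

lemma primrec_uB (s : ℕ) (L : List Bool) : Primrec (uB s L) := by
  have hg : Primrec fun k : ℕ => k + 1 - s == 0 :=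
    Primrec.beq.comp
      (Primrec.nat_sub.comp
        (Primrec.nat_add.comp Primrec.id (Primrec.const 1)) (Primrec.const s))
      (Primrec.const 0)
  have hg2 : Primrec fun k : ℕ => k % 2 == 1 :=
    Primrec.beq.comp (Primrec.nat_mod.comp Primrec.id (Primrec.const 2))
      (Primrec.const 1)
  have hst : Primrec fun n : ℕ => n + s + 1 :=
    Primrec.nat_add.comp (Primrec.nat_add.comp Primrec.id (Primrec.const s))
      (Primrec.const 1)
  exact Primrec.cond hg
    (Primrec.sumInl.comp ((Primrec.list_getD false).comp (Primrec.const L) Primrec.id))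
    (Primrec.cond hg2
      ((primrec_encPlan hst 0).comp
        (Primrec.nat_div.comp Primrec.id (Primrec.const 2)))
      (Primrec.const (Sum.inl false)))

lemma qB_le (q₂ q₁ : Cantor) (s : ℕ) : TuringLe (qBseq q₂ q₁ s) q₁ := by
  rw [← uB_eval q₂ q₁ s]
  exact planEval_le _ (primrec_uB s _) _

lemma leftC_qAseq (q₂ : Cantor) : leftC (qAseq q₂) = maEncode (inC 1 q₂) :=
  leftC_pairC _ _

lemma rightC_qAseq (q₂ : Cantor) : rightC (qAseq q₂) = zeroSeq :=
  rightC_pairC _ _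

lemma rightC_qBseq (q₂ q₁ : Cantor) (s : ℕ) :
    rightC (qBseq q₂ q₁ s) = delayMA s (inC 0 q₁) := by
  funext j
  show qBseq q₂ q₁ s (2 * j + 1) = _
  unfold qBseq
  by_cases h : 2 * j + 1 < s
  · rw [if_pos h]
    unfold qAseq pairC
    rw [if_neg (by omega), delayMA_low (by omega)]
    rfl
  · rw [if_neg h, if_pos (by omega)]
    congr 1
    omega

lemma initSeg_congr {p q : Cantor} {s : ℕ} (h : ∀ k < s, p k = q k) :
    initSeg p s = initSeg q s := by
  unfold initSeg
  apply List.map_congr_left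
  intro k hk
  exact h k (List.mem_range.mp hk)

lemma initSeg_qBseq (q₂ q₁ : Cantor) (s : ℕ) :
    initSeg (qBseq q₂ q₁ s) s = initSeg (qAseq q₂) s :=
  initSeg_congr fun k hk => by unfold qBseq; rw [if_pos hk]

end Aux3

/-! ### Helpers for the represented spaces in the main theorem -/

section Aux4

lemma pairC_eta (z : Cantor) : pairC (leftC z) (rightC z) = z := by
  funext n
  unfold pairC leftC rightC
  split_ifs with h
  · congr 1; omega
  · congr 1; omega

lemma natSet_ne : natSet 0 ≠ natSet 1 := by
  intro h
  have := congrFun h 0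
  simp [natSet] at this

lemma singleFn_eq_of_ne {p q r : Cantor} (h : ((singleFn p q).f r).Nonempty) : r = p := by
  by_cases hr : r = p
  · exact hr
  · exfalso
    have : (singleFn p q).f r = ∅ := if_neg hr
    rw [this] at h
    exact Set.not_nonempty_empty h

lemma singleFn_self (p q : Cantor) : (singleFn p q).f p = {q} := if_pos rfl

def hatval (A : RepSp) (p : Cantor) : Option A.X := ((evalMA p).bind A.δ).toOption

lemma mem_evalMA {a y : Cantor} (ht : TotalMonotoneApprox a) (hy : y = eVal a) :
    y ∈ evalMA a := ⟨ht, hy.symm⟩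

lemma hatval_total {A : RepSp} {a : Cantor} {x : A.X} (ht : TotalMonotoneApprox a)
    (hx : x ∈ A.δ (eVal a)) : hatval A a = some x :=
  Part.toOption_eq_some_iff.mpr (Part.mem_bind_iff.mpr ⟨eVal a, mem_evalMA ht rfl, hx⟩)

lemma hatval_some {A : RepSp} {a : Cantor} {x : A.X} (h : hatval A a = some x) :
    TotalMonotoneApprox a ∧ x ∈ A.δ (eVal a) := by
  obtain ⟨y, hy, hx⟩ := Part.mem_bind_iff.mp (Part.toOption_eq_some_iff.mp h)
  obtain ⟨ht, heq⟩ := hy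
  refine ⟨ht, ?_⟩
  have h2 : x ∈ A.δ ((evalMA a).get ht) := by rw [heq]; exact hx
  exact h2

lemma hatprod_δ (A B : RepSp) (w : Cantor) :
    ((A.hat).prod (B.hat)).δ w = Part.some (hatval A (leftC w), hatval B (rightC w)) := by
  show (Part.some (hatval A (leftC w))).bind
    (fun x => ((B.hat).δ (rightC w)).map fun y => (x, y)) = _
  rw [Part.bind_some]
  show (Part.some (hatval B (rightC w))).map (fun y => (hatval A (leftC w), y)) = _
  rw [Part.map_some]

lemma prodCδ (r : Cantor) :
    (CantorSp.prod CantorSp).δ r = Part.some (leftC r, rightC r) := by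
  show (Part.some (leftC r)).bind (fun x => (Part.some (rightC r)).map fun y => (x, y)) = _
  rw [Part.bind_some, Part.map_some]

lemma sumδ0 (A B : RepSp) {r : Cantor} (h : leftC r = natSet 0) :
    (A.sum B).δ r = (A.δ (rightC r)).map Sum.inl := by
  show (if leftC r = natSet 0 then _ else _) = _
  exact if_pos h

lemma sumδ1 (A B : RepSp) {r : Cantor} (h : leftC r = natSet 1) :
    (A.sum B).δ r = (B.δ (rightC r)).map Sum.inr := by
  show (if leftC r = natSet 0 then _ else if leftC r = natSet 1 then _ else _) = _
  exact (if_neg (by rw [h]; exact natSet_ne.symm)).trans (if_pos h)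

lemma sumδ_none (A B : RepSp) {r : Cantor} (h0 : leftC r ≠ natSet 0)
    (h1 : leftC r ≠ natSet 1) : (A.sum B).δ r = Part.none := by
  show (if leftC r = natSet 0 then _ else if leftC r = natSet 1 then _ else _) = _
  exact (if_neg h0).trans (if_neg h1)

lemma sumCδ0 (t : Cantor) :
    (CantorSp.sum CantorSp).δ (inC 0 t) = Part.some (Sum.inl t) := by
  show (CantorSp.sum CantorSp).δ (pairC (natSet 0) t) = _
  rw [sumδ0 _ _ (leftC_pairC _ _), rightC_pairC]
  show (Part.some t).map _ = _
  exact Part.map_some _ _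

lemma sumCδ1 (t : Cantor) :
    (CantorSp.sum CantorSp).δ (inC 1 t) = Part.some (Sum.inr t) := by
  show (CantorSp.sum CantorSp).δ (pairC (natSet 1) t) = _
  rw [sumδ1 _ _ (leftC_pairC _ _), rightC_pairC]
  show (Part.some t).map _ = _
  exact Part.map_some _ _

/-! ### The adversarial realizer -/

def Gfun (p₀ p₁ p₂ qa qb : Cantor) : Cantor →. Cantor := fun r =>
  if leftC r = natSet 0 ∧ rightC r = pairC p₀ p₂ then Part.some qa
  else if leftC r = natSet 1 ∧ rightC r = pairC p₁ p₂ then Part.some qb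
  else Part.none

section MainLemmas

variable (p₀ p₁ p₂ q₀ q₁ q₂ : Cantor)

lemma rhs_dom {r : Cantor}
    {x : (Cantor × Cantor) ⊕ (Cantor × Cantor)}
    (hx : x ∈ ((CantorSp.prod CantorSp).sum (CantorSp.prod CantorSp)).δ r)
    (hne : ((((singleFn p₀ q₀).sqcap (singleFn p₂ q₂)).boxplus
      ((singleFn p₁ q₁).sqcap (singleFn p₂ q₂))).f x).Nonempty) :
    (leftC r = natSet 0 ∧ rightC r = pairC p₀ p₂ ∧ x = Sum.inl (p₀, p₂)) ∨
    (leftC r = natSet 1 ∧ rightC r = pairC p₁ p₂ ∧ x = Sum.inr (p₁, p₂)) := by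
  by_cases h0 : leftC r = natSet 0
  · left
    rw [sumδ0 _ _ h0, prodCδ] at hx
    obtain ⟨ypair, hy, hxy⟩ := (Part.mem_map_iff _).mp hx
    replace hy := Part.mem_some_iff.mp hy
    subst hxy
    have hne2 : ((Option.some '' (((singleFn p₀ q₀).sqcap (singleFn p₂ q₂)).f ypair)) ×ˢ
        (Set.univ : Set (Option (Cantor ⊕ Cantor)))).Nonempty := hne
    rw [Set.prod_nonempty_iff] at hne2
    have hne3 := Set.image_nonempty.mp hne2.1
    have hcond : (((singleFn p₀ q₀)).f ypair.1).Nonempty ∧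
        (((singleFn p₂ q₂)).f ypair.2).Nonempty := by
      by_contra hc
      have he : ((singleFn p₀ q₀).sqcap (singleFn p₂ q₂)).f ypair = ∅ := if_neg hc
      rw [he] at hne3
      exact Set.not_nonempty_empty hne3
    have e1 : ypair.1 = p₀ := singleFn_eq_of_ne hcond.1
    have e2 : ypair.2 = p₂ := singleFn_eq_of_ne hcond.2
    have hl : leftC (rightC r) = p₀ := by rw [← e1, hy]
    have hr2 : rightC (rightC r) = p₂ := by rw [← e2, hy]
    have hrr : rightC r = pairC p₀ p₂ := by rw [← hl, ← hr2, pairC_eta]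
    have hyp : ypair = (p₀, p₂) := by rw [hy]; rw [hl, hr2]
    exact ⟨h0, hrr, by rw [hyp]; rfl⟩
  · by_cases h1 : leftC r = natSet 1
    · right
      rw [sumδ1 _ _ h1, prodCδ] at hx
      obtain ⟨ypair, hy, hxy⟩ := (Part.mem_map_iff _).mp hx
      replace hy := Part.mem_some_iff.mp hy
      subst hxy
      have hne2 : (((Set.univ : Set (Option (Cantor ⊕ Cantor)))) ×ˢ
          (Option.some '' (((singleFn p₁ q₁).sqcap (singleFn p₂ q₂)).f ypair))).Nonempty :=
        hne
      rw [Set.prod_nonempty_iff] at hne2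
      have hne3 := Set.image_nonempty.mp hne2.2
      have hcond : (((singleFn p₁ q₁)).f ypair.1).Nonempty ∧
          (((singleFn p₂ q₂)).f ypair.2).Nonempty := by
        by_contra hc
        have he : ((singleFn p₁ q₁).sqcap (singleFn p₂ q₂)).f ypair = ∅ := if_neg hc
        rw [he] at hne3
        exact Set.not_nonempty_empty hne3
      have e1 : ypair.1 = p₁ := singleFn_eq_of_ne hcond.1
      have e2 : ypair.2 = p₂ := singleFn_eq_of_ne hcond.2
      have hl : leftC (rightC r) = p₁ := by rw [← e1, hy]
      have hr2 : rightC (rightC r) = p₂ := by rw [← e2, hy]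
      have hrr : rightC r = pairC p₁ p₂ := by rw [← hl, ← hr2, pairC_eta]
      have hyp : ypair = (p₁, p₂) := by rw [hy]; rw [hl, hr2]
      exact ⟨h1, hrr, by rw [hyp]; rfl⟩
    · rw [sumδ_none _ _ h0 h1] at hx
      exact absurd hx (Part.notMem_none x)

lemma G_realizes (s : ℕ) :
    Realizes (Gfun p₀ p₁ p₂ (qAseq q₂) (qBseq q₂ q₁ s))
      (((singleFn p₀ q₀).sqcap (singleFn p₂ q₂)).boxplus
        ((singleFn p₁ q₁).sqcap (singleFn p₂ q₂))) := by
  intro r x hx hne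
  rcases rhs_dom p₀ p₁ p₂ q₀ q₁ q₂ hx hne with ⟨h0, hr, hxe⟩ | ⟨h1, hr, hxe⟩
  · refine ⟨qAseq q₂, ?_, ?_⟩
    · unfold Gfun
      rw [if_pos ⟨h0, hr⟩]
      exact Part.mem_some _
    · refine ⟨(hatval (CantorSp.sum CantorSp) (leftC (qAseq q₂)),
        hatval (CantorSp.sum CantorSp) (rightC (qAseq q₂))), ?_, ?_⟩
      · show _ ∈ (((CantorSp.sum CantorSp).hat).prod ((CantorSp.sum CantorSp).hat)).δ _
        rw [hatprod_δ]
        exact Part.mem_some _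
      · rw [hxe]
        show _ ∈ (Option.some '' (((singleFn p₀ q₀).sqcap (singleFn p₂ q₂)).f (p₀, p₂))) ×ˢ
          (Set.univ : Set (Option (Cantor ⊕ Cantor)))
        refine Set.mem_prod.mpr ⟨?_, trivial⟩
        show hatval (CantorSp.sum CantorSp) (leftC (qAseq q₂)) ∈ _
        rw [leftC_qAseq]
        have hv : hatval (CantorSp.sum CantorSp) (maEncode (inC 1 q₂)) =
            some (Sum.inr q₂) := by
          apply hatval_total (maEncode_total _)
          rw [eVal_maEncode, sumCδ1]
          exact Part.mem_some _
        rw [hv]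
        refine ⟨Sum.inr q₂, ?_, rfl⟩
        show Sum.inr q₂ ∈ (((singleFn p₀ q₀).sqcap (singleFn p₂ q₂)).f (p₀, p₂))
        have hcond : (((singleFn p₀ q₀)).f p₀).Nonempty ∧
            (((singleFn p₂ q₂)).f p₂).Nonempty := by
          rw [singleFn_self, singleFn_self]
          exact ⟨⟨q₀, rfl⟩, ⟨q₂, rfl⟩⟩
        show Sum.inr q₂ ∈ (if _ then _ else _ : Set _)
        refine (Set.ext_iff.mp (if_pos hcond) _).mpr ?_
        right
        rw [singleFn_self]
        exact ⟨q₂, rfl, rfl⟩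
  · refine ⟨qBseq q₂ q₁ s, ?_, ?_⟩
    · unfold Gfun
      rw [if_neg (fun hc => natSet_ne (hc.1.symm.trans h1)), if_pos ⟨h1, hr⟩]
      exact Part.mem_some _
    · refine ⟨(hatval (CantorSp.sum CantorSp) (leftC (qBseq q₂ q₁ s)),
        hatval (CantorSp.sum CantorSp) (rightC (qBseq q₂ q₁ s))), ?_, ?_⟩
      · show _ ∈ (((CantorSp.sum CantorSp).hat).prod ((CantorSp.sum CantorSp).hat)).δ _
        rw [hatprod_δ]
        exact Part.mem_some _
      · rw [hxe]
        show _ ∈ (Set.univ : Set (Option (Cantor ⊕ Cantor))) ×ˢ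
          (Option.some '' (((singleFn p₁ q₁).sqcap (singleFn p₂ q₂)).f (p₁, p₂)))
        refine Set.mem_prod.mpr ⟨trivial, ?_⟩
        show hatval (CantorSp.sum CantorSp) (rightC (qBseq q₂ q₁ s)) ∈ _
        rw [rightC_qBseq]
        have hv : hatval (CantorSp.sum CantorSp) (delayMA s (inC 0 q₁)) =
            some (Sum.inl q₁) := by
          apply hatval_total (delayMA_total _ _)
          rw [eVal_delayMA, sumCδ0]
          exact Part.mem_some _
        rw [hv]
        refine ⟨Sum.inl q₁, ?_, rfl⟩
        have hcond : (((singleFn p₁ q₁)).f p₁).Nonempty ∧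
            (((singleFn p₂ q₂)).f p₂).Nonempty := by
          rw [singleFn_self, singleFn_self]
          exact ⟨⟨q₁, rfl⟩, ⟨q₂, rfl⟩⟩
        show Sum.inl q₁ ∈ (if _ then _ else _ : Set _)
        refine (Set.ext_iff.mp (if_pos hcond) _).mpr ?_
        left
        rw [singleFn_self]
        exact ⟨q₁, rfl, rfl⟩

end MainLemmas

end Aux4

/-- proof of Theorem 4.5: under the stated Turing independence hypotheses,
for the single-point functions `f : p₀ ↦ q₀`, `g : p₁ ↦ q₁`, `h : p₂ ↦ q₂` one has
`(f ⊞ g) ⊓ h ≰_sW (f ⊓ h) ⊞ (g ⊓ h)`. -/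
theorem stmt13 : ∀ p₀ p₁ p₂ q₀ q₁ q₂ : Cantor,
    ¬ TuringLe p₀ (pairC p₁ p₂) → ¬ TuringLe p₁ (pairC p₀ p₂) →
    ¬ TuringLe q₀ q₂ → ¬ TuringLe q₂ q₁ →
    ¬ sWLe (((singleFn p₀ q₀).boxplus (singleFn p₁ q₁)).sqcap (singleFn p₂ q₂))
        (((singleFn p₀ q₀).sqcap (singleFn p₂ q₂)).boxplus
          ((singleFn p₁ q₁).sqcap (singleFn p₂ q₂))) := by
  intro p₀ p₁ p₂ q₀ q₁ q₂ h₀ h₁ h₂ h₃ hsW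
  obtain ⟨Φ, Ψ, hred⟩ := hsW
  -- shared facts about the left-hand side
  have hcondL0 : (((singleFn p₀ q₀).boxplus (singleFn p₁ q₁)).f (Sum.inl p₀)).Nonempty ∧
      ((singleFn p₂ q₂).f p₂).Nonempty := by
    constructor
    · refine ⟨(some q₀, none), ?_⟩
      show _ ∈ (Option.some '' ((singleFn p₀ q₀).f p₀)) ×ˢ (Set.univ : Set (Option Cantor))
      refine Set.mem_prod.mpr ⟨?_, trivial⟩
      rw [singleFn_self]
      exact ⟨q₀, rfl, rfl⟩
    · rw [singleFn_self]
      exact ⟨q₂, rfl⟩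
  have hcondL1 : (((singleFn p₀ q₀).boxplus (singleFn p₁ q₁)).f (Sum.inr p₁)).Nonempty ∧
      ((singleFn p₂ q₂).f p₂).Nonempty := by
    constructor
    · refine ⟨(none, some q₁), ?_⟩
      show _ ∈ (Set.univ : Set (Option Cantor)) ×ˢ (Option.some '' ((singleFn p₁ q₁).f p₁))
      refine Set.mem_prod.mpr ⟨trivial, ?_⟩
      rw [singleFn_self]
      exact ⟨q₁, rfl, rfl⟩
    · rw [singleFn_self]
      exact ⟨q₂, rfl⟩
  have hLval0 : ((((singleFn p₀ q₀).boxplus (singleFn p₁ q₁)).sqcap (singleFn p₂ q₂)).f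
      (Sum.inl p₀, p₂)) =
      Sum.inl '' (((singleFn p₀ q₀).boxplus (singleFn p₁ q₁)).f (Sum.inl p₀)) ∪
      Sum.inr '' ((singleFn p₂ q₂).f p₂) := if_pos hcondL0
  have hLval1 : ((((singleFn p₀ q₀).boxplus (singleFn p₁ q₁)).sqcap (singleFn p₂ q₂)).f
      (Sum.inr p₁, p₂)) =
      Sum.inl '' (((singleFn p₀ q₀).boxplus (singleFn p₁ q₁)).f (Sum.inr p₁)) ∪
      Sum.inr '' ((singleFn p₂ q₂).f p₂) := if_pos hcondL1
  have hx0mem : ((Sum.inl p₀, p₂) : (Cantor ⊕ Cantor) × Cantor) ∈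
      ((((singleFn p₀ q₀).boxplus (singleFn p₁ q₁)).sqcap (singleFn p₂ q₂)).A).δ
        (pairC (inC 0 p₀) p₂) := by
    show _ ∈ ((CantorSp.sum CantorSp).δ (leftC (pairC (inC 0 p₀) p₂))).bind
      (fun a => (Part.some (rightC (pairC (inC 0 p₀) p₂))).map fun b => (a, b))
    refine Part.mem_bind_iff.mpr ?_
    refine ⟨Sum.inl p₀, ?_, ?_⟩
    · rw [leftC_pairC, sumCδ0]
      exact Part.mem_some _
    · rw [rightC_pairC, Part.map_some]
      exact Part.mem_some _
  have hx1mem : ((Sum.inr p₁, p₂) : (Cantor ⊕ Cantor) × Cantor) ∈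
      ((((singleFn p₀ q₀).boxplus (singleFn p₁ q₁)).sqcap (singleFn p₂ q₂)).A).δ
        (pairC (inC 1 p₁) p₂) := by
    show _ ∈ ((CantorSp.sum CantorSp).δ (leftC (pairC (inC 1 p₁) p₂))).bind
      (fun a => (Part.some (rightC (pairC (inC 1 p₁) p₂))).map fun b => (a, b))
    refine Part.mem_bind_iff.mpr ?_
    refine ⟨Sum.inr p₁, ?_, ?_⟩
    · rw [leftC_pairC, sumCδ1]
      exact Part.mem_some _
    · rw [rightC_pairC, Part.map_some]
      exact Part.mem_some _
  have hx0ne : (((((singleFn p₀ q₀).boxplus (singleFn p₁ q₁)).sqcap (singleFn p₂ q₂)).f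
      (Sum.inl p₀, p₂))).Nonempty := by
    rw [hLval0]
    refine ⟨Sum.inr q₂, Or.inr ?_⟩
    rw [singleFn_self]
    exact ⟨q₂, rfl, rfl⟩
  have hx1ne : (((((singleFn p₀ q₀).boxplus (singleFn p₁ q₁)).sqcap (singleFn p₂ q₂)).f
      (Sum.inr p₁, p₂))).Nonempty := by
    rw [hLval1]
    refine ⟨Sum.inr q₂, Or.inr ?_⟩
    rw [singleFn_self]
    exact ⟨q₂, rfl, rfl⟩
  -- Stage 1: apply the reduction with the realizer `Gfun … (qBseq q₂ q₁ 0)` at `x₀`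
  obtain ⟨w, hw, y, hyδ, hysol⟩ :=
    hred (Gfun p₀ p₁ p₂ (qAseq q₂) (qBseq q₂ q₁ 0)) (G_realizes p₀ p₁ p₂ q₀ q₁ q₂ 0)
      (pairC (inC 0 p₀) p₂) (Sum.inl p₀, p₂) hx0mem hx0ne
  have hw' : w ∈ ((Φ.eval (pairC (inC 0 p₀) p₂)).bind
      (Gfun p₀ p₁ p₂ (qAseq q₂) (qBseq q₂ q₁ 0))).bind Ψ.eval := hw
  obtain ⟨u, hu, hwu⟩ := Part.mem_bind_iff.mp hw'
  obtain ⟨v₀, hv₀, huv⟩ := Part.mem_bind_iff.mp hu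
  have hGv : u = qAseq q₂ := by
    unfold Gfun at huv
    split_ifs at huv with c1 c2
    · exact Part.mem_some_iff.mp huv
    · exfalso
      have t1 : TuringLe p₁ v₀ := by
        have t := turingLe_lr v₀
        rw [c2.2, leftC_pairC] at t
        exact t
      exact h₁ (turingLe_trans (turingLe_trans t1 (turingLe_of_mem hv₀))
        (turingLe_pair_in 0 p₀ p₂))
    · exact absurd huv (Part.notMem_none u)
  rw [hGv] at hwu
  -- analyse the solution name `w`
  have hyδ2 : y ∈ (((CantorSp.hat).prod (CantorSp.hat)).sum CantorSp).δ w := hyδ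
  by_cases hz0 : leftC w = natSet 0
  · -- the f ⊞ g side was used: extract q₀ from w, contradiction with q₀ ≰ q₂
    rw [sumδ0 _ _ hz0, hatprod_δ] at hyδ2
    obtain ⟨pr, hpr, hypr⟩ := (Part.mem_map_iff _).mp hyδ2
    replace hpr := Part.mem_some_iff.mp hpr
    rw [hLval0, ← hypr] at hysol
    rcases hysol with ⟨pr', hpr', heq⟩ | ⟨z, hz, heq⟩
    · have hpp : pr' = pr := Sum.inl.inj heq
      have hpr2 : pr' ∈ (Option.some '' ((singleFn p₀ q₀).f p₀)) ×ˢ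
          (Set.univ : Set (Option Cantor)) := hpr'
      have hfst := (Set.mem_prod.mp hpr2).1
      rw [singleFn_self] at hfst
      obtain ⟨c, hc, hcs⟩ := hfst
      replace hc : c = q₀ := hc
      rw [hc] at hcs
      have hv : hatval CantorSp (leftC (rightC w)) = some q₀ := by
        rw [show hatval CantorSp (leftC (rightC w)) = pr.1 from by rw [hpr], ← hpp, ← hcs]; rfl
      obtain ⟨htot, hmem⟩ := hatval_some hv
      have hq₀ : q₀ = eVal (leftC (rightC w)) := Part.mem_some_iff.mp hmem
      refine absurd ?_ h₂
      rw [hq₀]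
      exact turingLe_trans (turingLe_trans (turingLe_trans (eVal_le htot) (turingLe_lr w))
        (turingLe_of_mem hwu)) (qA_le q₂)
    · exact (Sum.inr_ne_inl heq).elim
  · by_cases hz1 : leftC w = natSet 1
    · -- the h side was used on x₀; so `Ψ` outputs the tag bit `false` on `qAseq q₂`
      have hw0 : w 0 = false := by
        have hc := congrFun hz1 0
        have hl : leftC w 0 = w 0 := rfl
        rw [hl] at hc
        rw [hc]
        show natSet 1 0 = false
        unfold natSet
        exact decide_eq_false (by omega)
      obtain ⟨s₀, hs₀⟩ := TuringFunctional.mem_eval.mp hwu 0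
      rw [hw0] at hs₀
      -- Stage 2: apply the reduction with `qBseq q₂ q₁ s₀` at `x₁`
      obtain ⟨w', hw2, y', hy'δ, hy'sol⟩ :=
        hred (Gfun p₀ p₁ p₂ (qAseq q₂) (qBseq q₂ q₁ s₀)) (G_realizes p₀ p₁ p₂ q₀ q₁ q₂ s₀)
          (pairC (inC 1 p₁) p₂) (Sum.inr p₁, p₂) hx1mem hx1ne
      have hw2' : w' ∈ ((Φ.eval (pairC (inC 1 p₁) p₂)).bind
          (Gfun p₀ p₁ p₂ (qAseq q₂) (qBseq q₂ q₁ s₀))).bind Ψ.eval := hw2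
      obtain ⟨u', hu', hwu'⟩ := Part.mem_bind_iff.mp hw2'
      obtain ⟨v₁, hv₁, huv'⟩ := Part.mem_bind_iff.mp hu'
      have hGv' : u' = qBseq q₂ q₁ s₀ := by
        unfold Gfun at huv'
        split_ifs at huv' with c1 c2
        · exfalso
          have t1 : TuringLe p₀ v₁ := by
            have t := turingLe_lr v₁
            rw [c1.2, leftC_pairC] at t
            exact t
          exact h₀ (turingLe_trans (turingLe_trans t1 (turingLe_of_mem hv₁))
            (turingLe_pair_in 1 p₁ p₂))
        · exact Part.mem_some_iff.mp huv'
        · exact absurd huv' (Part.notMem_none u')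
      rw [hGv'] at hwu'
      -- the tag bit of `w'` is also `false`
      have hagree : Ψ.approx (initSeg (qBseq q₂ q₁ s₀) s₀) 0 = some false := by
        rw [initSeg_qBseq]
        exact hs₀
      obtain ⟨t, ht⟩ := TuringFunctional.mem_eval.mp hwu' 0
      have hw'0 : w' 0 = false := Ψ.approx_agree ht hagree
      -- analyse the solution name `w'`
      have hy'δ2 : y' ∈ (((CantorSp.hat).prod (CantorSp.hat)).sum CantorSp).δ w' := hy'δ
      by_cases hz0' : leftC w' = natSet 0
      · -- tag bit would be true
        have hc := congrFun hz0' 0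
        have hl : leftC w' 0 = w' 0 := rfl
        rw [hl, hw'0] at hc
        have : natSet 0 0 = true := decide_eq_true rfl
        rw [this] at hc
        exact Bool.noConfusion hc
      · by_cases hz1' : leftC w' = natSet 1
        · -- h side: rightC w' = q₂, contradiction with q₂ ≰ q₁
          rw [sumδ1 _ _ hz1'] at hy'δ2
          obtain ⟨z, hzmem, hzy⟩ := (Part.mem_map_iff _).mp hy'δ2
          have hzr : z = rightC w' := Part.mem_some_iff.mp hzmem
          rw [hLval1, ← hzy] at hy'sol
          rcases hy'sol with ⟨pr', hpr', heq⟩ | ⟨z', hz', heq⟩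
          · exact (Sum.inl_ne_inr heq).elim
          · have hzz : z' = z := Sum.inr.inj heq
            replace hz' : z' = q₂ := by rw [singleFn_self] at hz'; exact hz'
            refine absurd ?_ h₃
            rw [show q₂ = rightC w' from by rw [← hzr, ← hzz, hz']]
            exact turingLe_trans (turingLe_trans (turingLe_r w') (turingLe_of_mem hwu'))
              (qB_le q₂ q₁ s₀)
        · rw [sumδ_none _ _ hz0' hz1'] at hy'δ2
          exact absurd hy'δ2 (Part.notMem_none _)
    · rw [sumδ_none _ _ hz0 hz1] at hyδ2
      exact absurd hyδ2 (Part.notMem_none _)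


end

end StrongWeihrauch
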